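/- Fix α ∈ (0,1) and b ∈ (0,2) with (2−b)/(2+b) > α. For the function r(x,y) = y^α((b/2)|x|² − 1) on the cylinder Z = {|x| ≤ 1, 0 < y < 1} ⊆ ℝⁿ, there exists a constant C > 0 such that det(Hess r) ≥ C·(−r)^{n−1} throughout Z. -/

import Mathlib

open Matrix BigOperators

/-- Partial derivative in the `i`-th coordinate direction. -/
noncomputable def pd {n : ℕ} (i : Fin n) (f : (Fin n → ℝ) → ℝ) : (Fin n → ℝ) → ℝ :=
  fun x => fderiv ℝ f x (Pi.single i 1)

/-- Hessian matrix of second partial derivatives. -/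
noncomputable def hess {n : ℕ} (u : (Fin n → ℝ) → ℝ) (x : Fin n → ℝ) :
    Matrix (Fin n) (Fin n) ℝ :=
  Matrix.of fun i j => pd i (pd j u) x

noncomputable def projL {m : ℕ} (j : Fin (m+1)) : ((Fin (m+1) → ℝ) →L[ℝ] ℝ) :=
  ContinuousLinearMap.proj j

lemma projL_single {m : ℕ} (j k : Fin (m+1)) :
    projL j (Pi.single k 1) = if j = k then 1 else 0 := by
  simp [projL, Pi.single_apply]

lemma hasFDerivAt_A {m : ℕ} (a e β : ℝ) (x : Fin (m+1) → ℝ) (hx : x (Fin.last m) ≠ 0) :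
    HasFDerivAt (fun y : Fin (m+1) → ℝ =>
        (y (Fin.last m)) ^ β * (a * ∑ i : Fin m, (y i.castSucc) ^ 2 - e))
      ((β * (x (Fin.last m)) ^ (β - 1) * (a * ∑ i : Fin m, (x i.castSucc) ^ 2 - e)) • projL (Fin.last m)
        + ∑ i : Fin m, ((x (Fin.last m)) ^ β * (2 * a * x i.castSucc)) • projL i.castSucc) x := by
  have h1 : HasFDerivAt (fun y : Fin (m+1) → ℝ => (y (Fin.last m)) ^ β)
      ((β * (x (Fin.last m)) ^ (β - 1)) • projL (Fin.last m)) x := by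
    have hp : HasFDerivAt (fun y : Fin (m+1) → ℝ => y (Fin.last m)) (projL (Fin.last m)) x :=
      (projL (Fin.last m)).hasFDerivAt
    exact (Real.hasDerivAt_rpow_const (Or.inl hx)).comp_hasFDerivAt x hp
  have hs : HasFDerivAt (fun y : Fin (m+1) → ℝ => ∑ i : Fin m, (y i.castSucc) ^ 2)
      (∑ i : Fin m, ((2 * x i.castSucc)) • projL i.castSucc) x := by
    apply HasFDerivAt.fun_sum
    intro i _
    have hp : HasFDerivAt (fun y : Fin (m+1) → ℝ => y i.castSucc) (projL i.castSucc) x :=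
      (projL i.castSucc).hasFDerivAt
    have := (hasDerivAt_pow 2 (x i.castSucc)).comp_hasFDerivAt x hp
    simpa [Function.comp_def] using this
  have h2 : HasFDerivAt (fun y : Fin (m+1) → ℝ => a * ∑ i : Fin m, (y i.castSucc) ^ 2 - e)
      (a • ∑ i : Fin m, ((2 * x i.castSucc)) • projL i.castSucc) x := by
    simpa [smul_smul] using (hs.const_mul a).sub_const e
  have key := h1.mul h2
  have heq : ((β * (x (Fin.last m)) ^ (β - 1) * (a * ∑ i : Fin m, (x i.castSucc) ^ 2 - e)) • projL (Fin.last m)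
        + ∑ i : Fin m, ((x (Fin.last m)) ^ β * (2 * a * x i.castSucc)) • projL i.castSucc)
      = ((x (Fin.last m)) ^ β • (a • ∑ i : Fin m, ((2 * x i.castSucc)) • projL i.castSucc)
        + (a * ∑ i : Fin m, (x i.castSucc) ^ 2 - e) •
            ((β * (x (Fin.last m)) ^ (β - 1)) • projL (Fin.last m))) := by
    ext v
    simp only [ContinuousLinearMap.add_apply, ContinuousLinearMap.coe_sum', Finset.sum_apply,
      ContinuousLinearMap.coe_smul', Pi.smul_apply, smul_eq_mul, projL,
      ContinuousLinearMap.proj_apply, Finset.mul_sum]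
    rw [add_comm]
    congr 1
    · exact Finset.sum_congr rfl fun i _ => by ring
    · ring
  exact key.congr_fderiv heq.symm

lemma hasFDerivAt_B {m : ℕ} (a β : ℝ) (i₀ : Fin m) (x : Fin (m+1) → ℝ)
    (hx : x (Fin.last m) ≠ 0) :
    HasFDerivAt (fun y : Fin (m+1) → ℝ => (y (Fin.last m)) ^ β * (a * y i₀.castSucc))
      ((β * (x (Fin.last m)) ^ (β - 1) * (a * x i₀.castSucc)) • projL (Fin.last m)
        + ((x (Fin.last m)) ^ β * a) • projL i₀.castSucc) x := by
  have h1 : HasFDerivAt (fun y : Fin (m+1) → ℝ => (y (Fin.last m)) ^ β)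
      ((β * (x (Fin.last m)) ^ (β - 1)) • projL (Fin.last m)) x := by
    have hp : HasFDerivAt (fun y : Fin (m+1) → ℝ => y (Fin.last m)) (projL (Fin.last m)) x :=
      (projL (Fin.last m)).hasFDerivAt
    exact (Real.hasDerivAt_rpow_const (Or.inl hx)).comp_hasFDerivAt x hp
  have h2 : HasFDerivAt (fun y : Fin (m+1) → ℝ => a * y i₀.castSucc)
      (a • projL i₀.castSucc) x := by
    have hp : HasFDerivAt (fun y : Fin (m+1) → ℝ => y i₀.castSucc) (projL i₀.castSucc) x :=
      (projL i₀.castSucc).hasFDerivAt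
    exact hp.const_mul a
  have key := h1.mul h2
  apply key.congr_fderiv
  ext v
  simp only [ContinuousLinearMap.add_apply, ContinuousLinearMap.coe_smul', Pi.smul_apply,
    smul_eq_mul, projL, ContinuousLinearMap.proj_apply]
  ring

lemma fderiv_A_apply {m : ℕ} (a e β : ℝ) (x : Fin (m+1) → ℝ) (hx : x (Fin.last m) ≠ 0)
    (j : Fin (m+1)) :
    fderiv ℝ (fun y : Fin (m+1) → ℝ =>
        (y (Fin.last m)) ^ β * (a * ∑ i : Fin m, (y i.castSucc) ^ 2 - e)) x (Pi.single j 1)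
      = if j = Fin.last m
          then β * (x (Fin.last m)) ^ (β - 1) * (a * ∑ i : Fin m, (x i.castSucc) ^ 2 - e)
          else (x (Fin.last m)) ^ β * (2 * a * x j) := by
  rw [(hasFDerivAt_A a e β x hx).fderiv]
  simp only [ContinuousLinearMap.add_apply, ContinuousLinearMap.coe_sum', Finset.sum_apply,
    ContinuousLinearMap.coe_smul', Pi.smul_apply, smul_eq_mul, projL,
    ContinuousLinearMap.proj_apply, Pi.single_apply]
  rcases eq_or_ne j (Fin.last m) with hj | hj
  · subst hj
    rw [if_pos rfl]
    have : ∀ i : Fin m, (if (i.castSucc : Fin (m+1)) = Fin.last m then (1:ℝ) else 0) = 0 :=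
      fun i => if_neg (Fin.castSucc_lt_last i).ne
    simp [this]
  · obtain ⟨i₀, rfl⟩ : ∃ i₀ : Fin m, i₀.castSucc = j := ⟨Fin.castPred j hj, Fin.castSucc_castPred j hj⟩
    rw [if_neg hj, if_neg (fun h => hj h.symm)]
    simp only [Fin.castSucc_inj, mul_ite, mul_one, mul_zero, Finset.sum_ite_eq',
      Finset.mem_univ, if_pos]
    ring

lemma fderiv_B_apply {m : ℕ} (a β : ℝ) (i₀ : Fin m) (x : Fin (m+1) → ℝ)
    (hx : x (Fin.last m) ≠ 0) (j : Fin (m+1)) :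
    fderiv ℝ (fun y : Fin (m+1) → ℝ => (y (Fin.last m)) ^ β * (a * y i₀.castSucc)) x
        (Pi.single j 1)
      = if j = Fin.last m
          then β * (x (Fin.last m)) ^ (β - 1) * (a * x i₀.castSucc)
          else (x (Fin.last m)) ^ β * a * (if j = i₀.castSucc then 1 else 0) := by
  rw [(hasFDerivAt_B a β i₀ x hx).fderiv]
  simp only [ContinuousLinearMap.add_apply, ContinuousLinearMap.coe_smul', Pi.smul_apply,
    smul_eq_mul, projL, ContinuousLinearMap.proj_apply, Pi.single_apply]
  rcases eq_or_ne j (Fin.last m) with hj | hj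
  · subst hj
    simp [(Fin.castSucc_lt_last i₀).ne, (Fin.castSucc_lt_last i₀).ne.symm]
  · rcases eq_or_ne j i₀.castSucc with hji | hji
    · subst hji
      simp [hj, Ne.symm hj]
    · simp [hj, Ne.symm hj, hji, Ne.symm hji]

/-- The partial derivatives of u in a coordinate direction, valid where the last coord is ≠ 0. -/
lemma pd_u_castSucc {m : ℕ} (α b : ℝ) (i₀ : Fin m) (z : Fin (m+1) → ℝ)
    (hz : z (Fin.last m) ≠ 0) :
    pd i₀.castSucc (fun y : Fin (m+1) → ℝ =>
        (y (Fin.last m)) ^ α * ((b/2) * ∑ i : Fin m, (y i.castSucc) ^ 2 - 1)) z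
      = (z (Fin.last m)) ^ α * (b * z i₀.castSucc) := by
  show fderiv ℝ _ z (Pi.single i₀.castSucc 1) = _
  rw [fderiv_A_apply (b/2) 1 α z hz, if_neg (Fin.castSucc_lt_last i₀).ne]
  ring

lemma pd_u_last {m : ℕ} (α b : ℝ) (z : Fin (m+1) → ℝ) (hz : z (Fin.last m) ≠ 0) :
    pd (Fin.last m) (fun y : Fin (m+1) → ℝ =>
        (y (Fin.last m)) ^ α * ((b/2) * ∑ i : Fin m, (y i.castSucc) ^ 2 - 1)) z
      = (z (Fin.last m)) ^ (α - 1) * ((α * (b/2)) * ∑ i : Fin m, (z i.castSucc) ^ 2 - α) := by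
  show fderiv ℝ _ z (Pi.single (Fin.last m) 1) = _
  rw [fderiv_A_apply (b/2) 1 α z hz, if_pos rfl]
  ring

lemma hess_eq {m : ℕ} (α b : ℝ) (x : Fin (m+1) → ℝ) (hx : 0 < x (Fin.last m)) :
    hess (fun y : Fin (m+1) → ℝ =>
        (y (Fin.last m)) ^ α * ((b/2) * ∑ i : Fin m, (y i.castSucc) ^ 2 - 1)) x
      = Matrix.of (fun i j : Fin (m+1) =>
          if i = Fin.last m then
            (if j = Fin.last m
              then (α-1) * (x (Fin.last m)) ^ (α-1-1) *
                    ((α * (b/2)) * ∑ i : Fin m, (x i.castSucc) ^ 2 - α)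
              else α * b * (x (Fin.last m)) ^ (α-1) * x j)
          else (if j = Fin.last m then α * b * (x (Fin.last m)) ^ (α-1) * x i
                else if i = j then b * (x (Fin.last m)) ^ α else 0)) := by
  have hmem : {z : Fin (m+1) → ℝ | 0 < z (Fin.last m)} ∈ nhds x :=
    (isOpen_lt continuous_const (continuous_apply _)).mem_nhds hx
  ext i j
  show pd i (pd j _) x = _
  refine Fin.lastCases ?_ ?_ j
  · -- j = last : pd last u =ᶠ A-form with a = α*(b/2), e = α, β = α-1
    have hev : (pd (Fin.last m) (fun y : Fin (m+1) → ℝ =>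
          (y (Fin.last m)) ^ α * ((b/2) * ∑ i : Fin m, (y i.castSucc) ^ 2 - 1)))
        =ᶠ[nhds x] (fun z : Fin (m+1) → ℝ =>
          (z (Fin.last m)) ^ (α-1) * ((α * (b/2)) * ∑ i : Fin m, (z i.castSucc) ^ 2 - α)) :=
      Filter.eventuallyEq_of_mem hmem (fun z hz => pd_u_last α b z (ne_of_gt hz))
    show fderiv ℝ _ x (Pi.single i 1) = _
    rw [hev.fderiv_eq, fderiv_A_apply (α * (b/2)) α (α-1) x hx.ne']
    refine Fin.lastCases ?_ ?_ i
    · simp only [Matrix.of_apply, if_true, eq_self_iff_true]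
    · intro i'
      simp only [Matrix.of_apply, if_true, eq_self_iff_true,
        if_neg (show (i'.castSucc : Fin (m+1)) ≠ Fin.last m from (Fin.castSucc_lt_last i').ne)]
      ring
  · -- j = castSucc j' : pd j u =ᶠ B-form with a = b, β = α
    intro j'
    have hev : (pd j'.castSucc (fun y : Fin (m+1) → ℝ =>
          (y (Fin.last m)) ^ α * ((b/2) * ∑ i : Fin m, (y i.castSucc) ^ 2 - 1)))
        =ᶠ[nhds x] (fun z : Fin (m+1) → ℝ =>
          (z (Fin.last m)) ^ α * (b * z j'.castSucc)) :=
      Filter.eventuallyEq_of_mem hmem (fun z hz => pd_u_castSucc α b j' z (ne_of_gt hz))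
    show fderiv ℝ _ x (Pi.single i 1) = _
    rw [hev.fderiv_eq, fderiv_B_apply b α j' x hx.ne']
    have hj' : (j'.castSucc : Fin (m+1)) ≠ Fin.last m := (Fin.castSucc_lt_last j').ne
    refine Fin.lastCases ?_ ?_ i
    · simp only [Matrix.of_apply, if_true, eq_self_iff_true, if_neg hj']
      ring
    · intro i'
      have hi' : (i'.castSucc : Fin (m+1)) ≠ Fin.last m := (Fin.castSucc_lt_last i').ne
      simp only [Matrix.of_apply, if_neg hi', if_neg hj']
      rcases eq_or_ne (i'.castSucc : Fin (m+1)) j'.castSucc with h | h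
      · rw [if_pos h, if_pos h]; ring
      · rw [if_neg h, if_neg h]; ring


lemma det_arrowhead {m : ℕ} (d e : ℝ) (c : Fin (m+1) → ℝ) (hd : d ≠ 0) :
    (Matrix.of (fun i j : Fin (m+1) =>
        if i = Fin.last m then (if j = Fin.last m then e else c j)
        else (if j = Fin.last m then c i else if i = j then d else 0))).det
      = d ^ m * (e - (∑ i : Fin m, (c i.castSucc) ^ 2) / d) := by
  have hect : ∀ k : Fin m, ((k.castSucc : Fin (m+1)) = Fin.last m) = False :=
    fun k => eq_false (Fin.castSucc_lt_last k).ne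
  have hect' : ∀ k : Fin m, ((Fin.last m : Fin (m+1)) = k.castSucc) = False :=
    fun k => eq_false (Ne.symm (Fin.castSucc_lt_last k).ne)
  set L : Matrix (Fin (m+1)) (Fin (m+1)) ℝ :=
    Matrix.of (fun i j => if i = j then 1 else if i = Fin.last m then c j / d else 0) with hL
  set dv : Fin (m+1) → ℝ :=
    fun k => if k = Fin.last m then e - (∑ i : Fin m, (c i.castSucc) ^ 2) / d else d with hdv
  have hfact : (Matrix.of (fun i j : Fin (m+1) =>
        if i = Fin.last m then (if j = Fin.last m then e else c j)
        else (if j = Fin.last m then c i else if i = j then d else 0)))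
      = L * (Matrix.diagonal dv * Lᵀ) := by
    ext i j
    rw [Matrix.mul_apply]
    have hDL : ∀ k, (Matrix.diagonal dv * Lᵀ) k j = dv k * L j k := by
      intro k
      rw [Matrix.diagonal_mul, Matrix.transpose_apply]
    simp only [hDL]
    refine Fin.lastCases ?_ (fun i' => ?_) i
    · refine Fin.lastCases ?_ (fun j' => ?_) j
      · rw [Fin.sum_univ_castSucc]
        simp only [hL, hdv, Matrix.of_apply, hect, hect', if_false, if_true, eq_self_iff_true]
        have : ∀ k : Fin m, c k.castSucc / d * (d * (c k.castSucc / d)) = c k.castSucc ^2 / d := by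
          intro k; field_simp
        rw [Finset.sum_congr rfl (fun k _ => this k), ← Finset.sum_div]
        field_simp
        ring
      · rw [Fin.sum_univ_castSucc]
        simp only [hL, hdv, Matrix.of_apply, hect, hect', if_false, if_true, eq_self_iff_true]
        have : ∀ k : Fin m,
            c k.castSucc / d * (d * (if (j'.castSucc : Fin (m+1)) = k.castSucc then (1:ℝ) else 0))
              = if (j'.castSucc : Fin (m+1)) = k.castSucc then c k.castSucc else 0 := by
          intro k
          rcases eq_or_ne (j'.castSucc : Fin (m+1)) k.castSucc with h | h
          · rw [if_pos h, if_pos h]; field_simp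
          · rw [if_neg h, if_neg h]; ring
        rw [Finset.sum_congr rfl (fun k _ => this k)]
        simp [Fin.castSucc_inj, Finset.sum_ite_eq]
    · -- i = castSucc i'
      have hcoll : ∀ F : Fin (m+1) → ℝ,
          (∑ k, (if (i'.castSucc : Fin (m+1)) = k then (1:ℝ) else 0) * F k) = F i'.castSucc := by
        intro F
        simp [ite_mul, Finset.sum_ite_eq]
      have hLrow : ∀ k, L i'.castSucc k = if (i'.castSucc : Fin (m+1)) = k then (1:ℝ) else 0 := by
        intro k
        simp only [hL, Matrix.of_apply, hect, if_false]
      have hsum : (∑ k, L i'.castSucc k * (dv k * L j k))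
          = dv i'.castSucc * L j i'.castSucc := by
        have hk : ∀ k, L i'.castSucc k * (dv k * L j k)
            = (if (i'.castSucc : Fin (m+1)) = k then (1:ℝ) else 0) * (dv k * L j k) :=
          fun k => by rw [hLrow k]
        rw [Finset.sum_congr rfl (fun k _ => hk k)]
        exact hcoll _
      rw [hsum]
      simp only [hdv, hL, Matrix.of_apply, hect, if_false]
      refine Fin.lastCases ?_ (fun j' => ?_) j
      · simp only [hect', if_false, if_true, eq_self_iff_true]
        field_simp
      · simp only [hect, if_false]
        rcases eq_or_ne (i'.castSucc : Fin (m+1)) j'.castSucc with h | h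
        · rw [if_pos h, if_pos h.symm, mul_one]
        · rw [if_neg h, if_neg (Ne.symm h), mul_zero]
  have hdetL : L.det = 1 := by
    have htri : L.BlockTriangular OrderDual.toDual := by
      intro i j hij
      have hij' : i < j := hij
      simp only [hL, Matrix.of_apply]
      rw [if_neg (ne_of_lt hij'), if_neg (ne_of_lt (lt_of_lt_of_le hij' (Fin.le_last j)))]
    rw [Matrix.det_of_lowerTriangular L htri]
    simp [hL]
  have hdetD : (Matrix.diagonal dv).det
      = d ^ m * (e - (∑ i : Fin m, (c i.castSucc) ^ 2) / d) := by
    rw [Matrix.det_diagonal, Fin.prod_univ_castSucc]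
    simp only [hdv, hect, if_false, if_true, eq_self_iff_true]
    rw [Finset.prod_const]
    simp [mul_comm]
  rw [hfact, Matrix.det_mul, Matrix.det_mul, Matrix.det_transpose, hdetL, hdetD]
  ring



lemma final_bound (m : ℕ) (α b : ℝ) (hα0 : 0 < α) (hα1 : α < 1) (hb0 : 0 < b) (hb2 : b < 2)
    (hαb : α * (2 + b) < 2 - b) (y S : ℝ) (hy0 : 0 < y) (hy1 : y < 1)
    (hS0 : 0 ≤ S) (hS1 : S ≤ 1) (hm0 : m = 0 → S = 0) :
    (b * y ^ α) ^ m *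
        ((α - 1) * y ^ (α - 1 - 1) * ((α * (b / 2)) * S - α)
          - ((α * b * y ^ (α - 1)) ^ 2 * S) / (b * y ^ α))
      ≥ (α * (((1 - α) * (2 - b) - 2 * α * b) / 2) * b ^ m) * (-(y ^ α * (b / 2 * S - 1))) ^ m := by
  have h2b : (0:ℝ) < 2 - b := by linarith
  have hA : 0 < y ^ α := Real.rpow_pos_of_pos hy0 _
  have hG : 0 < y ^ (α - 1 - 1) := Real.rpow_pos_of_pos hy0 _
  have hc₀ : 0 < (1 - α) * (2 - b) - 2 * α * b := by nlinarith
  have hBB : (y ^ (α - 1)) ^ 2 = y ^ (α - 1 - 1) * y ^ α := by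
    rw [sq, ← Real.rpow_add hy0, ← Real.rpow_add hy0]
    congr 1
    ring
  have hG1 : (1:ℝ) ≤ y ^ (α - 1 - 1) := by
    have := Real.rpow_le_rpow_of_exponent_ge hy0 hy1.le (by linarith : α - 1 - 1 ≤ 0)
    rwa [Real.rpow_zero] at this
  have hq0 : 0 < 1 - b / 2 * S := by nlinarith
  have hq1 : 1 - b / 2 * S ≤ 1 := by nlinarith
  have hdiv : ((α * b * y ^ (α - 1)) ^ 2 * S) / (b * y ^ α)
      = α ^ 2 * b * y ^ (α - 1 - 1) * S := by
    rw [mul_pow, mul_pow, hBB]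
    field_simp
  have hinner : ((α - 1) * y ^ (α - 1 - 1) * ((α * (b / 2)) * S - α)
        - ((α * b * y ^ (α - 1)) ^ 2 * S) / (b * y ^ α))
      = y ^ (α - 1 - 1) * (α * ((1 - α) * (1 - b / 2 * S) - α * b * S)) := by
    rw [hdiv]
    ring
  rw [hinner]
  have hbase : (-(y ^ α * (b / 2 * S - 1))) = y ^ α * (1 - b / 2 * S) := by ring
  rw [hbase]
  have hw : (1 - b / 2 * S) ^ m ≤ 1 - b / 2 * S := by
    cases m with
    | zero => rw [hm0 rfl]; norm_num
    | succ m' => exact pow_le_of_le_one hq0.le hq1 (Nat.succ_ne_zero _)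
  have hKc : (((1 - α) * (2 - b) - 2 * α * b) / 2) * (1 - b / 2 * S)
      ≤ (1 - α) * (1 - b / 2 * S) - α * b * S := by
    have d0 : (0:ℝ) ≤ (1 - S) * (b * (1 + α) / 2) :=
      mul_nonneg (by linarith) (by positivity)
    have d1 : (0:ℝ) ≤ S * ((((1 - α) * (2 - b) - 2 * α * b) / 2) * (b / 2)) :=
      mul_nonneg hS0 (mul_nonneg (by linarith) (by linarith))
    nlinarith [d0, d1]
  have hK0 : 0 ≤ (1 - α) * (1 - b / 2 * S) - α * b * S := by nlinarith
  have step : α * (((1 - α) * (2 - b) - 2 * α * b) / 2) * ((1 - b / 2 * S) ^ m)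
      ≤ y ^ (α - 1 - 1) * (α * ((1 - α) * (1 - b / 2 * S) - α * b * S)) := by
    have h1 : α * (((1 - α) * (2 - b) - 2 * α * b) / 2) * ((1 - b / 2 * S) ^ m)
        ≤ α * ((1 - α) * (1 - b / 2 * S) - α * b * S) := by
      have e1 := mul_le_mul_of_nonneg_left hw
        (mul_nonneg hα0.le (by linarith : (0:ℝ) ≤ ((1 - α) * (2 - b) - 2 * α * b) / 2))
      have e2 := mul_le_mul_of_nonneg_left hKc hα0.le
      nlinarith [e1, e2]
    have h2 : α * ((1 - α) * (1 - b / 2 * S) - α * b * S)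
        ≤ y ^ (α - 1 - 1) * (α * ((1 - α) * (1 - b / 2 * S) - α * b * S)) :=
      le_mul_of_one_le_left (mul_nonneg hα0.le hK0) hG1
    linarith
  have hP : (0:ℝ) ≤ b ^ m * (y ^ α) ^ m := by positivity
  calc (α * (((1 - α) * (2 - b) - 2 * α * b) / 2) * b ^ m) * (y ^ α * (1 - b / 2 * S)) ^ m
      = (b ^ m * (y ^ α) ^ m) * (α * (((1 - α) * (2 - b) - 2 * α * b) / 2) * ((1 - b / 2 * S) ^ m)) := by
        rw [mul_pow]; ring
    _ ≤ (b ^ m * (y ^ α) ^ m) *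
          (y ^ (α - 1 - 1) * (α * ((1 - α) * (1 - b / 2 * S) - α * b * S))) :=
        mul_le_mul_of_nonneg_left step hP
    _ = (b * y ^ α) ^ m *
          (y ^ (α - 1 - 1) * (α * ((1 - α) * (1 - b / 2 * S) - α * b * S))) := by
        rw [mul_pow]


/-- for r(x,y) = y^α((b/2)|x|²-1) on the cylinder Z there is C > 0
with det(Hess r) ≥ C(-r)^{n-1} on Z. Here the last coordinate plays the role of y. -/
theorem stmt_12 {m : ℕ} (α b : ℝ) (hα0 : 0 < α) (hα1 : α < 1)
    (hb0 : 0 < b) (hb2 : b < 2) (hαb : (2 - b) / (2 + b) > α) :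
    ∃ C > (0 : ℝ), ∀ x : Fin (m + 1) → ℝ,
      (∑ i : Fin m, (x i.castSucc) ^ 2) ≤ 1 →
      0 < x (Fin.last m) → x (Fin.last m) < 1 →
      (hess (fun y => (y (Fin.last m)) ^ α *
          ((b / 2) * ∑ i : Fin m, (y i.castSucc) ^ 2 - 1)) x).det
        ≥ C * (-( (x (Fin.last m)) ^ α *
          ((b / 2) * ∑ i : Fin m, (x i.castSucc) ^ 2 - 1))) ^ m := by
  have h2b : (0:ℝ) < 2 - b := by linarith
  have hαb' : α * (2 + b) < 2 - b := (lt_div_iff₀ (by linarith : (0:ℝ) < 2 + b)).mp hαb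
  have hc₀ : 0 < (1 - α) * (2 - b) - 2 * α * b := by nlinarith
  refine ⟨α * (((1 - α) * (2 - b) - 2 * α * b) / 2) * b ^ m, by positivity, ?_⟩
  intro x hS1 hy0 hy1
  have hS0 : 0 ≤ ∑ i : Fin m, (x i.castSucc) ^ 2 :=
    Finset.sum_nonneg fun i _ => sq_nonneg _
  have hm0 : m = 0 → (∑ i : Fin m, (x i.castSucc) ^ 2) = 0 := by
    intro h; subst h; simp
  have hd : b * (x (Fin.last m)) ^ α ≠ 0 :=
    (mul_pos hb0 (Real.rpow_pos_of_pos hy0 α)).ne'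
  rw [hess_eq α b x hy0,
    det_arrowhead (b * (x (Fin.last m)) ^ α)
      ((α - 1) * (x (Fin.last m)) ^ (α - 1 - 1) *
        ((α * (b / 2)) * ∑ i : Fin m, (x i.castSucc) ^ 2 - α))
      (fun k => α * b * (x (Fin.last m)) ^ (α - 1) * x k) hd]
  have hsq : (∑ i : Fin m, (α * b * (x (Fin.last m)) ^ (α - 1) * x i.castSucc) ^ 2)
      = (α * b * (x (Fin.last m)) ^ (α - 1)) ^ 2 * ∑ i : Fin m, (x i.castSucc) ^ 2 := by
    rw [Finset.mul_sum]
    exact Finset.sum_congr rfl fun i _ => by ring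
  simp only [hsq]
  exact final_bound m α b hα0 hα1 hb0 hb2 hαb' (x (Fin.last m))
    (∑ i : Fin m, (x i.castSucc) ^ 2) hy0 hy1 hS0 hS1 hm0
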